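/- In an Eulerian digraph D with n vertices, the number of oriented spanning trees rooted at a fixed vertex r equals the number of arborescences rooted at r (spanning trees in which from r there is a unique directed path to every vertex). -/

import Mathlib

open Classical

/-- A finite multidigraph: finite vertex and edge types with initial and final
vertex maps. -/
structure Multidigraph where
  V : Type
  E : Type
  [fintV : Fintype V]
  [fintE : Fintype E]
  first : E → V
  last : E → V

attribute [instance] Multidigraph.fintV Multidigraph.fintE

namespace Multidigraph

variable (D : Multidigraph)

/-- The out-degree of a vertex. -/
noncomputable def outdeg (v : D.V) : ℕ := Nat.card {e : D.E // D.first e = v}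

/-- The in-degree of a vertex. -/
noncomputable def indeg (v : D.V) : ℕ := Nat.card {e : D.E // D.last e = v}

/-- Undirected adjacency using only edges in `T`. -/
def Adj (T : Set D.E) (a b : D.V) : Prop :=
  ∃ e ∈ T, (D.first e = a ∧ D.last e = b) ∨ (D.first e = b ∧ D.last e = a)

/-- Undirected reachability using only edges in `T`. -/
def Reach (T : Set D.E) : D.V → D.V → Prop := Relation.ReflTransGen (D.Adj T)

/-- The underlying undirected graph is connected. -/
def Connected : Prop := ∀ a b : D.V, D.Reach Set.univ a b

/-- An Eulerian digraph: connected and with in-degree equal to out-degree at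
every vertex. -/
def Eulerian : Prop := D.Connected ∧ ∀ v : D.V, D.indeg v = D.outdeg v

/-- `T` is a spanning tree of the underlying undirected graph: it connects all
vertices and has `|V| - 1` edges. -/
def IsSpanningTree (T : Set D.E) : Prop :=
  (∀ a b : D.V, D.Reach T a b) ∧ Nat.card T = Nat.card D.V - 1

/-- The out-degree of `v` in the subgraph `T` after reversing the orientations
of the edges in `S`. -/
noncomputable def outdegRev (T S : Set D.E) (v : D.V) : ℕ :=
  Nat.card {e : D.E // (e ∈ T \ S ∧ D.first e = v) ∨ (e ∈ S ∧ D.last e = v)}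

/-- `T` becomes an oriented spanning tree rooted at `r` (every vertex has a
unique directed path to `r`, i.e. every non-root vertex has out-degree `1` and
the root has out-degree `0` in the tree) after reversing exactly the edges of
`S ⊆ T`. -/
def IsOrientedSpanningTreeRev (T S : Set D.E) (r : D.V) : Prop :=
  D.IsSpanningTree T ∧ S ⊆ T ∧ (∀ v : D.V, v ≠ r → D.outdegRev T S v = 1) ∧
    D.outdegRev T S r = 0

/-- `T` is an oriented spanning tree rooted at `r`: every vertex has a unique
directed path to `r`. -/
def IsOrientedSpanningTree (T : Set D.E) (r : D.V) : Prop :=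
  D.IsOrientedSpanningTreeRev T ∅ r

/-- `T` is a `k`-spanning tree rooted at `r`: reversing the orientation of
exactly `k` of its edges yields an oriented spanning tree rooted at `r`. -/
def IsKSpanningTree (T : Set D.E) (r : D.V) (k : ℕ) : Prop :=
  ∃ S : Set D.E, Nat.card S = k ∧ D.IsOrientedSpanningTreeRev T S r

/-- `c D k r` is the number of `k`-spanning trees of `D` rooted at `r`. -/
noncomputable def c (k : ℕ) (r : D.V) : ℕ :=
  Nat.card {T : Set D.E // D.IsKSpanningTree T r k}

/-- The transpose digraph: every edge reversed. -/
def transpose : Multidigraph := { D with first := D.last, last := D.first }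

end Multidigraph


namespace Multidigraph

variable (D : Multidigraph)

/-- The in-degree of `v` within the edge set `T`. -/
noncomputable def indegIn (T : Set D.E) (v : D.V) : ℕ :=
  Nat.card {e : D.E // e ∈ T ∧ D.last e = v}

/-- An arborescence rooted at `r`: a spanning tree with a unique directed path
from `r` to every vertex, i.e. every non-root vertex has in-degree `1` and the
root has in-degree `0` in the tree. -/
def IsArborescence (T : Set D.E) (r : D.V) : Prop :=
  D.IsSpanningTree T ∧ (∀ v : D.V, v ≠ r → D.indegIn T v = 1) ∧ D.indegIn T r = 0

end Multidigraph

namespace Multidigraph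

section Aux

variable (D : Multidigraph) (r : D.V)

/-- Nonroot vertices. -/
abbrev NR := {v : D.V // v ≠ r}

/-- `φ` assigns to each nonroot vertex an out-edge. -/
def GoodFn (φ : D.NR r → D.E) : Prop := ∀ u, D.first (φ u) = u.val

/-- The chain `u, φ u, φ (φ u), …` reaches `r` in `n + 1` steps. -/
def reachesN (φ : D.NR r → D.E) : ℕ → D.NR r → Prop
  | 0, u => D.last (φ u) = r
  | n+1, u => ∃ u', D.last (φ u) = u'.val ∧ reachesN φ n u'

/-- Every vertex reaches the root along the functional graph of `φ`. -/
def AcyclicFn (φ : D.NR r → D.E) : Prop := ∀ u, ∃ n, D.reachesN r φ n u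

/-- Undirected walks of given length to the root. -/
def walkN (T : Set D.E) : ℕ → D.V → Prop
  | 0, v => v = r
  | n+1, v => ∃ w, D.Adj T v w ∧ walkN T n w

variable {D r}

theorem adj_symm {T : Set D.E} {a b : D.V} (h : D.Adj T a b) : D.Adj T b a := by
  obtain ⟨e, he, h⟩ := h
  exact ⟨e, he, h.symm⟩

theorem reach_symm {T : Set D.E} {a b : D.V} (h : D.Reach T a b) : D.Reach T b a :=
  haveI : Std.Symm (D.Adj T) := ⟨fun _ _ h => adj_symm h⟩
  Std.Symm.symm (r := Relation.ReflTransGen (D.Adj T)) _ _ h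

theorem reach_mono {T T' : Set D.E} (h : ∀ a b, D.Adj T a b → D.Reach T' a b)
    {a b : D.V} (hr : D.Reach T a b) : D.Reach T' a b := by
  induction hr with
  | refl => exact .refl
  | tail _ hadj ih => exact ih.trans (h _ _ hadj)

theorem card_NR : Nat.card (D.NR r) = Nat.card D.V - 1 := by
  classical
  rw [Nat.card_eq_fintype_card, Nat.card_eq_fintype_card]
  have : Fintype.card {v : D.V // ¬ v = r} = Fintype.card D.V - Fintype.card {v : D.V // v = r} :=
    Fintype.card_subtype_compl _
  rw [Fintype.card_subtype_eq] at this
  simpa using this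

theorem card_le_of_reach {T : Set D.E} (h : ∀ v, D.Reach T v r) :
    Nat.card D.V - 1 ≤ Nat.card T := by
  classical
  have hwalk : ∀ v, ∃ n, D.walkN r T n v := by
    intro v
    have hv := h v
    induction hv using Relation.ReflTransGen.head_induction_on with
    | refl => exact ⟨0, rfl⟩
    | head hadj _ ih => obtain ⟨n, hn⟩ := ih; exact ⟨n+1, _, hadj, hn⟩
  set d : D.V → ℕ := fun v => Nat.find (hwalk v) with hd
  have step : ∀ u : D.NR r, ∃ e, e ∈ T ∧ ∃ w,
      ((D.first e = u.val ∧ D.last e = w) ∨ (D.first e = w ∧ D.last e = u.val)) ∧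
      d w < d u.val := by
    intro u
    have hdu : D.walkN r T (d u.val) u.val := Nat.find_spec (hwalk u.val)
    cases hn : d u.val with
    | zero => rw [hn] at hdu; exact absurd hdu u.2
    | succ n =>
      rw [hn] at hdu
      obtain ⟨w, hadj, hwn⟩ := hdu
      obtain ⟨e, he, hor⟩ := hadj
      exact ⟨e, he, w, hor, by have : d w ≤ n := Nat.find_le hwn; omega⟩
  choose e he w hw1 hw2 using step
  have inj : Function.Injective (fun u => (⟨e u, he u⟩ : T)) := by
    intro u₁ u₂ heq
    simp only [Subtype.mk_eq_mk] at heq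
    by_contra hne
    have h1 := hw1 u₁
    have h2 := hw1 u₂
    rw [heq] at h1
    have d1 := hw2 u₁
    have d2 := hw2 u₂
    rcases h1 with ⟨ha, hb⟩ | ⟨ha, hb⟩ <;> rcases h2 with ⟨hc, hd'⟩ | ⟨hc, hd'⟩
    · exact hne (Subtype.ext (ha.symm.trans hc))
    · -- first e = u₁, last e = w u₁ ; first e = w u₂, last e = u₂
      have e1 : w u₂ = u₁.val := hc.symm.trans ha
      have e2 : w u₁ = u₂.val := hb.symm.trans hd'
      rw [e1] at d2; rw [e2] at d1; omega
    · have e1 : w u₂ = u₁.val := hd'.symm.trans hb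
      have e2 : w u₁ = u₂.val := ha.symm.trans hc
      rw [e1] at d2; rw [e2] at d1; omega
    · exact hne (Subtype.ext (hb.symm.trans hd'))
  have := Nat.card_le_card_of_injective _ inj
  rwa [card_NR] at this

theorem outdegRev_empty {T : Set D.E} {v : D.V} :
    D.outdegRev T ∅ v = Nat.card {e : D.E // e ∈ T ∧ D.first e = v} := by
  unfold outdegRev
  exact Nat.card_congr (Equiv.subtypeEquivRight (by intro e; simp))

end Aux

end Multidigraph

namespace Multidigraph

section Aux2

variable {D : Multidigraph} {r : D.V}

theorem good_inj {φ : D.NR r → D.E} (hφ : D.GoodFn r φ) : Function.Injective φ :=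
  fun a b hab => Subtype.ext (by rw [← hφ a, hab, hφ b])

theorem range_eq_of_good {φ φ' : D.NR r → D.E} (hφ : D.GoodFn r φ) (hφ' : D.GoodFn r φ')
    (h : Set.range φ = Set.range φ') : φ = φ' := by
  funext u
  have hm : φ u ∈ Set.range φ' := h ▸ Set.mem_range_self u
  obtain ⟨u', hu'⟩ := hm
  have hval : u' = u := Subtype.ext (by rw [← hφ' u', hu', hφ u])
  rw [← hu', hval]

theorem exists_cycle {φ : D.NR r → D.E} (h : ¬ D.AcyclicFn r φ) :
    ∃ (m : ℕ) (g : ℕ → D.NR r), 0 < m ∧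
      (∀ k, D.last (φ (g k)) = (g (k+1)).val) ∧
      (∀ k, g (k % m) = g k) ∧
      (∀ a b, a < m → b < m → g a = g b → a = b) := by
  classical
  unfold AcyclicFn at h
  push_neg at h
  obtain ⟨u₀, hu₀⟩ := h
  have hF : ∀ b : {u : D.NR r // ∀ n, ¬ D.reachesN r φ n u},
      ∃ b' : {u : D.NR r // ∀ n, ¬ D.reachesN r φ n u}, D.last (φ b.val) = b'.val.val := by
    intro b
    have hne : D.last (φ b.val) ≠ r := fun hh => b.2 0 hh
    refine ⟨⟨⟨D.last (φ b.val), hne⟩, ?_⟩, rfl⟩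
    intro n hn
    exact b.2 (n+1) ⟨_, rfl, hn⟩
  choose F hFspec using hF
  have hij : ∃ i j, i < j ∧ F^[i] ⟨u₀, hu₀⟩ = F^[j] ⟨u₀, hu₀⟩ := by
    obtain ⟨i, j, hne, heq⟩ := Finite.exists_ne_map_eq_of_infinite (fun k : ℕ => F^[k] ⟨u₀, hu₀⟩)
    rcases lt_or_gt_of_ne hne with h' | h'
    · exact ⟨i, j, h', heq⟩
    · exact ⟨j, i, h', heq.symm⟩
  obtain ⟨i, j, hij, heq⟩ := hij
  set w := F^[i] ⟨u₀, hu₀⟩ with hw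
  have hper : Function.IsPeriodicPt F (j - i) w := by
    show F^[j-i] w = w
    rw [hw, ← Function.iterate_add_apply, Nat.sub_add_cancel hij.le]
    exact heq.symm
  set m := Function.minimalPeriod F w with hm
  have hm0 : 0 < m := hper.minimalPeriod_pos (by omega)
  refine ⟨m, fun k => (F^[k] w).val, hm0, ?_, ?_, ?_⟩
  · intro k
    show D.last (φ (F^[k] w).val) = (F^[k+1] w).val.val
    rw [Function.iterate_succ_apply']
    exact hFspec (F^[k] w)
  · intro k
    have h' : F^[k % m] w = F^[k] w := Function.iterate_mod_minimalPeriod_eq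
    exact congrArg Subtype.val h'
  · intro a b ha hb hab
    exact Function.iterate_injOn_Iio_minimalPeriod (Set.mem_Iio.mpr ha) (Set.mem_Iio.mpr hb)
      (Subtype.ext hab)

theorem reach_of_reachesN {φ : D.NR r → D.E} (hφ : D.GoodFn r φ) :
    ∀ (n : ℕ) (u : D.NR r), D.reachesN r φ n u → D.Reach (Set.range φ) u.val r := by
  intro n
  induction n with
  | zero =>
    intro u hu
    exact Relation.ReflTransGen.single ⟨φ u, Set.mem_range_self u, Or.inl ⟨hφ u, hu⟩⟩
  | succ n ih =>
    intro u hu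
    obtain ⟨u', h1, h2⟩ := hu
    exact Relation.ReflTransGen.head ⟨φ u, Set.mem_range_self u, Or.inl ⟨hφ u, h1⟩⟩ (ih u' h2)

theorem ost_iff (T : Set D.E) :
    D.IsOrientedSpanningTree T r ↔
      ∃ φ : D.NR r → D.E, D.GoodFn r φ ∧ D.AcyclicFn r φ ∧ T = Set.range φ := by
  classical
  constructor
  · rintro ⟨⟨hreach, hcard⟩, -, hdeg, hroot⟩
    have hdeg' : ∀ u : D.NR r, ∃ e, (e ∈ T ∧ D.first e = u.val) ∧
        ∀ e', (e' ∈ T ∧ D.first e' = u.val) → e' = e := by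
      intro u
      have h1 : Nat.card {e : D.E // e ∈ T ∧ D.first e = u.val} = 1 := by
        rw [← outdegRev_empty]; exact hdeg u.val u.2
      rw [Nat.card_eq_one_iff_unique] at h1
      obtain ⟨hs, ⟨e, he⟩⟩ := h1
      exact ⟨e, he, fun e' he' => congrArg Subtype.val (hs.allEq ⟨e', he'⟩ ⟨e, he⟩)⟩
    choose φ hmem huniq using hdeg'
    have hgood : D.GoodFn r φ := fun u => (hmem u).2
    have hrange : T = Set.range φ := by
      apply Set.Subset.antisymm
      · intro e he
        have hne : D.first e ≠ r := by
          intro hr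
          have h0 : Nat.card {e : D.E // e ∈ T ∧ D.first e = r} = 0 := by
            rw [← outdegRev_empty]; exact hroot
          haveI : Nonempty {e' : D.E // e' ∈ T ∧ D.first e' = r} := ⟨⟨e, he, hr⟩⟩
          have := Nat.card_pos (α := {e' : D.E // e' ∈ T ∧ D.first e' = r})
          omega
        exact ⟨⟨D.first e, hne⟩, (huniq ⟨D.first e, hne⟩ e ⟨he, rfl⟩).symm⟩
      · rintro e ⟨u, rfl⟩
        exact (hmem u).1
    refine ⟨φ, hgood, ?_, hrange⟩
    by_contra hac
    obtain ⟨m, g, hm0, hstep, hmod, hinj⟩ := exists_cycle hac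
    set T' := T \ {φ (g 0)} with hT'
    have hφinj : Function.Injective φ := good_inj hgood
    have hgm : g m = g 0 := by
      have h' := hmod m
      rw [Nat.mod_self] at h'
      exact h'.symm
    have hclaim : ∀ i, i ≤ m - 1 → D.Reach T' ((g (m - i)).val) ((g 0).val) := by
      intro i
      induction i with
      | zero =>
        intro _
        simp only [Nat.sub_zero]
        rw [hgm]
        exact Relation.ReflTransGen.refl
      | succ i ih =>
        intro hi
        have prev := ih (by omega)
        have harith : m - (i+1) + 1 = m - i := by omega
        have hedge : φ (g (m - (i+1))) ≠ φ (g 0) := by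
          intro hEq
          have h1 := hφinj hEq
          have h2 := hinj (m - (i+1)) 0 (by omega) hm0 h1
          omega
        have hadj : D.Adj T' ((g (m - (i+1))).val) ((g (m - i)).val) := by
          refine ⟨φ (g (m - (i+1))), ⟨?_, hedge⟩, Or.inl ⟨hgood _, ?_⟩⟩
          · rw [hrange]; exact Set.mem_range_self _
          · rw [← harith]; exact hstep _
        exact Relation.ReflTransGen.head hadj prev
    have hsim : ∀ a b, D.Adj T a b → D.Reach T' a b := by
      rintro a b ⟨e, he, hor⟩
      by_cases hee : e = φ (g 0)
      · subst hee
        have h1 := hclaim (m-1) le_rfl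
        rw [show m - (m-1) = 1 by omega] at h1
        have hf : D.first (φ (g 0)) = (g 0).val := hgood _
        have hl : D.last (φ (g 0)) = (g 1).val := hstep 0
        rcases hor with ⟨h1', h2'⟩ | ⟨h1', h2'⟩
        · rw [← h1', ← h2', hf, hl]
          exact reach_symm h1
        · rw [← h1', ← h2', hf, hl]
          exact h1
      · exact Relation.ReflTransGen.single ⟨e, ⟨he, hee⟩, hor⟩
    have hreach' : ∀ v, D.Reach T' v r := fun v => reach_mono hsim (hreach v r)
    have hcard' := card_le_of_reach hreach'
    have hmem0 : φ (g 0) ∈ T := by rw [hrange]; exact Set.mem_range_self _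
    have h1 : Nat.card T' = Nat.card T - 1 := by
      rw [Nat.card_coe_set_eq, Nat.card_coe_set_eq, hT']
      exact Set.ncard_diff_singleton_of_mem hmem0
    haveI : Nonempty T := ⟨⟨φ (g 0), hmem0⟩⟩
    have h2 : 0 < Nat.card T := Nat.card_pos
    omega
  · rintro ⟨φ, hgood, hac, rfl⟩
    have hφinj : Function.Injective φ := good_inj hgood
    refine ⟨⟨?_, ?_⟩, Set.empty_subset _, ?_, ?_⟩
    · have hroot : ∀ v : D.V, D.Reach (Set.range φ) v r := by
        intro v
        by_cases hv : v = r
        · subst hv; exact .refl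
        · obtain ⟨n, hn⟩ := hac ⟨v, hv⟩
          exact reach_of_reachesN hgood n ⟨v, hv⟩ hn
      intro a b
      exact (hroot a).trans (reach_symm (hroot b))
    · have hco : Nat.card (Set.range φ) = Nat.card (D.NR r) :=
        Nat.card_congr (Equiv.ofInjective φ hφinj).symm
      rw [hco, card_NR]
    · intro v hv
      rw [outdegRev_empty, Nat.card_eq_one_iff_unique]
      constructor
      · constructor
        rintro ⟨e, ⟨⟨u, rfl⟩, hfe⟩⟩ ⟨e', ⟨⟨u', rfl⟩, hfe'⟩⟩
        have huu : u = u' := Subtype.ext (by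
          rw [hgood u] at hfe
          rw [hgood u'] at hfe'
          rw [hfe, hfe'])
        simp [huu]
      · exact ⟨⟨φ ⟨v, hv⟩, Set.mem_range_self _, hgood _⟩⟩
    · rw [outdegRev_empty]
      haveI : IsEmpty {e : D.E // e ∈ Set.range φ ∧ D.first e = r} := by
        constructor
        rintro ⟨e, ⟨⟨u, rfl⟩, hfe⟩⟩
        exact u.2 ((hgood u).symm.trans hfe)
      exact Nat.card_of_isEmpty

theorem card_ost_eq (D : Multidigraph) (r : D.V) :
    Nat.card {T : Set D.E // D.IsOrientedSpanningTree T r} =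
      Nat.card {φ : D.NR r → D.E // D.GoodFn r φ ∧ D.AcyclicFn r φ} := by
  have hbij : Function.Bijective
      (fun φ : {φ : D.NR r → D.E // D.GoodFn r φ ∧ D.AcyclicFn r φ} =>
        (⟨Set.range φ.val, (ost_iff _).mpr ⟨φ.val, φ.2.1, φ.2.2, rfl⟩⟩ :
          {T : Set D.E // D.IsOrientedSpanningTree T r})) := by
    constructor
    · intro a b hab
      exact Subtype.ext (range_eq_of_good a.2.1 b.2.1 (congrArg Subtype.val hab))
    · intro T
      obtain ⟨φ, h1, h2, h3⟩ := (ost_iff T.val).mp T.2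
      exact ⟨⟨φ, h1, h2⟩, Subtype.ext h3.symm⟩
  exact (Nat.card_eq_of_bijective _ hbij).symm

end Aux2

end Multidigraph

namespace Multidigraph

section Det

variable (D : Multidigraph) (r : D.V)

/-- The matrix `I - R` associated to an out-edge choice function. -/
noncomputable def nmat (φ : D.NR r → D.E) : Matrix (D.NR r) (D.NR r) ℚ :=
  Matrix.of fun u v => (if u = v then (1:ℚ) else 0) - (if D.last (φ u) = v.val then 1 else 0)

/-- The reduced (out-degree) Laplacian of `D` at `r`. -/
noncomputable def lap : Matrix (D.NR r) (D.NR r) ℚ :=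
  Matrix.of fun u v => ∑ e ∈ Finset.univ.filter (fun e => D.first e = u.val),
    ((if D.first e = v.val then (1:ℚ) else 0) - (if D.last e = v.val then 1 else 0))

variable {D r}

theorem det_nmat (φ : D.NR r → D.E) :
    (D.nmat r φ).det = if D.AcyclicFn r φ then 1 else 0 := by
  classical
  by_cases hac : D.AcyclicFn r φ
  · rw [if_pos hac]
    set rank : D.NR r → ℕ := fun u => Nat.find (hac u) with hrank
    have key2 : ∀ u u' : D.NR r, D.last (φ u) = u'.val → rank u' < rank u := by
      intro u u' h
      have hs : D.reachesN r φ (rank u) u := Nat.find_spec (hac u)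
      cases hn : rank u with
      | zero =>
        rw [hn] at hs
        exact absurd (h.symm.trans hs) u'.2
      | succ n =>
        rw [hn] at hs
        obtain ⟨u'', h1, h2⟩ := hs
        have huu : u'' = u' := Subtype.ext (h1.symm.trans h)
        subst huu
        have hle : rank u'' ≤ n := Nat.find_le h2
        omega
    have hbt : ((D.nmat r φ).transpose).BlockTriangular rank := by
      intro i j hlt
      show (D.nmat r φ) j i = 0
      have h1 : ¬ (j = i) := fun h => by rw [h] at hlt; omega
      have h2 : ¬ (D.last (φ j) = i.val) := fun h => by have := key2 j i h; omega
      show (if j = i then (1:ℚ) else 0) - (if D.last (φ j) = i.val then 1 else 0) = 0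
      rw [if_neg h1, if_neg h2, sub_zero]
    rw [← Matrix.det_transpose (D.nmat r φ), hbt.det]
    apply Finset.prod_eq_one
    intro a _
    have hblock : ((D.nmat r φ).transpose.toSquareBlock rank a) = 1 := by
      ext i j
      show (D.nmat r φ) j.val i.val = (1 : Matrix {u // rank u = a} {u // rank u = a} ℚ) i j
      have h2 : ¬ (D.last (φ j.val) = (i.val).val) := by
        intro h
        have hk := key2 j.val i.val h
        rw [i.2, j.2] at hk
        omega
      show (if (j.val : D.NR r) = i.val then (1:ℚ) else 0)
          - (if D.last (φ j.val) = (i.val).val then 1 else 0) = _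
      rw [if_neg h2, sub_zero, Matrix.one_apply]
      by_cases hij : i = j
      · rw [if_pos hij, if_pos (by rw [hij])]
      · rw [if_neg hij, if_neg (fun h => hij (Subtype.ext (Subtype.ext (congrArg Subtype.val h))).symm)]
    rw [hblock, Matrix.det_one]
  · rw [if_neg hac]
    obtain ⟨m, g, hm0, hstep, hmod, hinj⟩ := exists_cycle hac
    set C : Finset (D.NR r) := (Finset.range m).image g with hC
    set x : D.NR r → ℚ := fun u => if u ∈ C then 1 else 0 with hx
    have hginj : ∀ a ∈ Finset.range m, ∀ b ∈ Finset.range m, g a = g b → a = b :=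
      fun a ha b hb hab => hinj a b (Finset.mem_range.mp ha) (Finset.mem_range.mp hb) hab
    have hvm : Matrix.vecMul x (D.nmat r φ) = 0 := by
      funext v
      show (∑ u, x u * (D.nmat r φ) u v) = 0
      have e1 : ∀ u : D.NR r, x u * (D.nmat r φ) u v =
          if u ∈ C then (D.nmat r φ) u v else 0 := by
        intro u
        rw [hx]
        by_cases h : u ∈ C <;> simp [h]
      rw [Finset.sum_congr rfl (fun u _ => e1 u), Finset.sum_ite_mem, Finset.univ_inter]
      have e2 : ∀ u : D.NR r, (D.nmat r φ) u v =
          (if u = v then (1:ℚ) else 0) - (if D.last (φ u) = v.val then 1 else 0) := fun u => rfl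
      rw [Finset.sum_congr rfl (fun u _ => e2 u), Finset.sum_sub_distrib]
      have hS1 : (∑ u ∈ C, if u = v then (1:ℚ) else 0) = if v ∈ C then 1 else 0 :=
        Finset.sum_ite_eq' C v (fun _ => (1:ℚ))
      have hS2 : (∑ u ∈ C, if D.last (φ u) = v.val then (1:ℚ) else 0) = if v ∈ C then 1 else 0 := by
        rw [hC, Finset.sum_image hginj]
        have e3 : ∀ k ∈ Finset.range m,
            (if D.last (φ (g k)) = v.val then (1:ℚ) else 0) =
            (if g ((k+1) % m) = v then (1:ℚ) else 0) := by
          intro k _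
          rw [hstep k, hmod (k+1)]
          congr 1
          exact propext ⟨fun h => Subtype.ext h, fun h => congrArg Subtype.val h⟩
        rw [Finset.sum_congr rfl e3]
        have e4 : (∑ k ∈ Finset.range m, if g ((k+1) % m) = v then (1:ℚ) else 0) =
            ∑ k ∈ Finset.range m, (if g k = v then (1:ℚ) else 0) := by
          apply Finset.sum_nbij' (fun k => (k+1) % m) (fun l => (l + (m-1)) % m)
          · intro a ha
            exact Finset.mem_range.mpr (Nat.mod_lt _ hm0)
          · intro a ha
            exact Finset.mem_range.mpr (Nat.mod_lt _ hm0)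
          · intro a ha
            rw [Nat.mod_add_mod]
            have : a + 1 + (m - 1) = a + m := by omega
            rw [this, Nat.add_mod_right, Nat.mod_eq_of_lt (Finset.mem_range.mp ha)]
          · intro a ha
            rw [Nat.mod_add_mod, Nat.add_assoc]
            have : m - 1 + 1 = m := by omega
            rw [this, Nat.add_mod_right, Nat.mod_eq_of_lt (Finset.mem_range.mp ha)]
          · intro a ha
            rfl
        rw [e4]
        -- now go back to sum over C
        have e5 : (∑ u ∈ (Finset.range m).image g, (fun u => if u = v then (1:ℚ) else 0) u) =
            ∑ k ∈ Finset.range m, (fun u => if u = v then (1:ℚ) else 0) (g k) :=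
          Finset.sum_image hginj
        simp only [] at e5
        exact e5.symm.trans hS1
      rw [hS1, hS2, sub_self]
    have hx0 : x ≠ 0 := by
      intro h
      have h1 : x (g 0) = 1 := by
        have hin : g 0 ∈ C := Finset.mem_image.mpr ⟨0, Finset.mem_range.mpr hm0, rfl⟩
        simp [hx, hin]
      rw [h] at h1
      simp at h1
    by_contra hdet
    exact hx0 (Matrix.eq_zero_of_vecMul_eq_zero hdet hvm)

end Det

end Multidigraph

namespace Multidigraph

section Glue

theorem det_lap (D : Multidigraph) (r : D.V) :
    (D.lap r).det =
      (Nat.card {φ : D.NR r → D.E // D.GoodFn r φ ∧ D.AcyclicFn r φ} : ℚ) := by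
  classical
  set A : D.NR r → Finset D.E := fun u => Finset.univ.filter (fun e => D.first e = u.val) with hA
  set row : D.E → (D.NR r → ℚ) := fun e v =>
    (if D.first e = v.val then (1:ℚ) else 0) - (if D.last e = v.val then 1 else 0) with hrow
  have key := (Matrix.detRowAlternating :
      (D.NR r → ℚ) [⋀^(D.NR r)]→ₗ[ℚ] ℚ).toMultilinearMap.map_sum_finset (fun _ e => row e) A
  have hM : D.lap r = fun u => ∑ e ∈ A u, row e := by
    funext u v
    rw [Finset.sum_apply]
    rfl
  have h1 : (D.lap r).det = ∑ φ ∈ Fintype.piFinset A,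
      Matrix.det (Matrix.of fun u => row (φ u)) := by
    rw [hM]
    exact key
  rw [h1]
  have h2 : ∀ φ ∈ Fintype.piFinset A,
      Matrix.det (Matrix.of fun u => row (φ u)) = if D.AcyclicFn r φ then (1:ℚ) else 0 := by
    intro φ hφ
    have hgood : D.GoodFn r φ := by
      intro u
      have hu := (Fintype.mem_piFinset.mp hφ) u
      exact (Finset.mem_filter.mp hu).2
    have hmat : (Matrix.of fun u => row (φ u)) = D.nmat r φ := by
      ext u v
      show (if D.first (φ u) = v.val then (1:ℚ) else 0) - (if D.last (φ u) = v.val then 1 else 0) =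
        (if u = v then (1:ℚ) else 0) - (if D.last (φ u) = v.val then 1 else 0)
      congr 1
      rw [hgood u]
      congr 1
      exact propext ⟨fun h => Subtype.ext h, fun h => congrArg Subtype.val h⟩
    rw [hmat, det_nmat]
  rw [Finset.sum_congr rfl h2]
  have hpi : Fintype.piFinset A = Finset.univ.filter (fun φ => D.GoodFn r φ) := by
    ext φ
    simp only [Fintype.mem_piFinset, hA, Finset.mem_filter, Finset.mem_univ, true_and]
    exact ⟨fun h => h, fun h => h⟩
  rw [Finset.sum_boole, hpi, Finset.filter_filter, Nat.card_eq_fintype_card, Fintype.card_subtype]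

theorem lap_apply (D : Multidigraph) (r : D.V) (u v : D.NR r) :
    D.lap r u v = (if u = v then ((Finset.univ.filter (fun e => D.first e = u.val)).card : ℚ) else 0)
      - ((Finset.univ.filter (fun e => D.first e = u.val ∧ D.last e = v.val)).card : ℚ) := by
  classical
  show (∑ e ∈ Finset.univ.filter (fun e => D.first e = u.val),
    ((if D.first e = v.val then (1:ℚ) else 0) - (if D.last e = v.val then 1 else 0))) = _
  rw [Finset.sum_sub_distrib]
  congr 1
  · have h1 : ∀ e ∈ Finset.univ.filter (fun e => D.first e = u.val),
        (if D.first e = v.val then (1:ℚ) else 0) = (if u = v then 1 else 0) := by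
      intro e he
      have hfe : D.first e = u.val := (Finset.mem_filter.mp he).2
      rw [hfe]
      congr 1
      exact propext ⟨fun h => Subtype.ext h, fun h => congrArg Subtype.val h⟩
    rw [Finset.sum_congr rfl h1]
    by_cases h : u = v <;> simp [h]
  · rw [Finset.sum_boole, Finset.filter_filter]

theorem lap_transpose (D : Multidigraph) (r : D.V) (hbal : ∀ v : D.V, D.indeg v = D.outdeg v) :
    D.transpose.lap r = (D.lap r).transpose := by
  classical
  funext u v
  show D.transpose.lap r u v = D.lap r v u
  erw [lap_apply, lap_apply]
  have hf : D.transpose.first = D.last := rfl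
  have hl : D.transpose.last = D.first := rfl
  rw [hf, hl]
  congr 1
  · by_cases h : u = v
    · subst h
      erw [if_pos rfl, if_pos rfl]
      have hb := hbal u.val
      unfold indeg outdeg at hb
      rw [Nat.card_eq_fintype_card, Nat.card_eq_fintype_card, Fintype.card_subtype,
        Fintype.card_subtype] at hb
      exact_mod_cast hb
    · rw [if_neg h, if_neg (fun hh => h hh.symm)]
  · congr 1
    apply congrArg
    ext e
    simp only [Finset.mem_filter, Finset.mem_univ, true_and]
    erw [Finset.mem_filter]
    exact ⟨fun h => ⟨Finset.mem_univ _, h.2, h.1⟩, fun h => ⟨h.2.2, h.2.1⟩⟩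

theorem reach_transpose (D : Multidigraph) (T : Set D.E) (a b : D.V) :
    D.transpose.Reach T a b ↔ D.Reach T a b := by
  constructor
  · intro h
    refine Relation.ReflTransGen.mono ?_ _ _ h
    rintro x y ⟨e, he, ⟨h1, h2⟩ | ⟨h1, h2⟩⟩
    · exact ⟨e, he, Or.inr ⟨h2, h1⟩⟩
    · exact ⟨e, he, Or.inl ⟨h2, h1⟩⟩
  · intro h
    refine Relation.ReflTransGen.mono ?_ _ _ h
    rintro x y ⟨e, he, ⟨h1, h2⟩ | ⟨h1, h2⟩⟩
    · exact ⟨e, he, Or.inr ⟨h2, h1⟩⟩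
    · exact ⟨e, he, Or.inl ⟨h2, h1⟩⟩

theorem outdegRev_transpose (D : Multidigraph) (T : Set D.E) (v : D.V) :
    D.transpose.outdegRev T ∅ v = D.indegIn T v := by
  apply Nat.card_congr
  apply Equiv.subtypeEquivRight
  intro e
  constructor
  · rintro (⟨⟨h1, -⟩, h3⟩ | ⟨h, -⟩)
    · exact ⟨h1, h3⟩
    · exact absurd h (Set.notMem_empty e)
  · rintro ⟨h1, h2⟩
    exact Or.inl ⟨⟨h1, Set.notMem_empty e⟩, h2⟩

theorem arb_iff (D : Multidigraph) (r : D.V) (T : Set D.E) :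
    D.IsArborescence T r ↔ D.transpose.IsOrientedSpanningTree T r := by
  constructor
  · rintro ⟨⟨h1, h2⟩, h3, h4⟩
    refine ⟨⟨?_, h2⟩, Set.empty_subset _, ?_, ?_⟩
    · intro a b; exact (reach_transpose D T a b).mpr (h1 a b)
    · intro v hv; erw [outdegRev_transpose]; exact h3 v hv
    · erw [outdegRev_transpose]; exact h4
  · rintro ⟨⟨h1, h2⟩, -, h3, h4⟩
    refine ⟨⟨fun a b => (reach_transpose D T a b).mp (h1 a b), h2⟩, ?_, ?_⟩
    · intro v hv; rw [← outdegRev_transpose]; exact h3 v hv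
    · rw [← outdegRev_transpose]; exact h4

end Glue

end Multidigraph

/-- In an Eulerian digraph `D`, the number of oriented spanning
trees rooted at `r` equals the number of arborescences rooted at `r`. -/
theorem stmt1 (D : Multidigraph) (hD : D.Eulerian) (r : D.V) :
    Nat.card {T : Set D.E // D.IsOrientedSpanningTree T r} =
      Nat.card {T : Set D.E // D.IsArborescence T r} := by
  classical
  have hbal : ∀ v : D.V, D.indeg v = D.outdeg v := hD.2
  have h1 : ((Nat.card {T : Set D.E // D.IsOrientedSpanningTree T r} : ℚ)) = (D.lap r).det := by
    rw [Multidigraph.card_ost_eq D r, ← Multidigraph.det_lap D r]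
  have e1 : Nat.card {T : Set D.E // D.IsArborescence T r} =
      Nat.card {T : Set D.transpose.E // D.transpose.IsOrientedSpanningTree T r} :=
    Nat.card_congr (Equiv.subtypeEquivRight (fun T => Multidigraph.arb_iff D r T))
  have h2 : ((Nat.card {T : Set D.E // D.IsArborescence T r} : ℚ)) = (D.transpose.lap r).det := by
    rw [e1, Multidigraph.card_ost_eq D.transpose r, ← Multidigraph.det_lap D.transpose r]
  erw [Multidigraph.lap_transpose D r hbal, Matrix.det_transpose] at h2
  exact_mod_cast h1.trans h2.symm
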